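/- For every topological space X and every bounded continuous function f : X → ℝ, f belongs to U*_{ℵ0}(X) if and only if for every ε > 0 there exists a continuous function g : X → ℝ_disc (that is, g : X → ℝ is continuous when ℝ carries the discrete topology) with bounded range such that sup_{x∈X} |f(x) − g(x)| ≤ ε. Equivalently, U*_{ℵ0}(X) is the closure of C*(X, ℝ_disc) in the space of bounded continuous real-valued functions on X equipped with the topology of uniform convergence (the supremum metric). -/

import Mathlib

open Topology TopologicalSpace Set

/-- For a topological space `X` and a bounded continuous function `f : X → ℝ`,
`f ∈ U*_{ℵ₀}(X)` (i.e. for every `ε > 0` there is a countable clopen cover of `X`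
on each member of which the oscillation of `f` is at most `ε`) if and only if for
every `ε > 0` there is a continuous function `g` from `X` to `ℝ` with the discrete
topology (i.e. a locally constant function) with bounded range such that
`|f x − g x| ≤ ε` for all `x`; equivalently, `U*_{ℵ₀}(X)` is the closure of
`C*(X, ℝ_disc)` in the topology of uniform convergence. -/
theorem stmt2 {X : Type*} [TopologicalSpace X] (f : X → ℝ)
    (hf : Continuous f) (hb : ∃ M : ℝ, ∀ x : X, |f x| ≤ M) :
    (∀ ε : ℝ, 0 < ε → ∃ 𝒜 : Set (Set X), 𝒜.Countable ∧ ⋃₀ 𝒜 = Set.univ ∧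
        ∀ A ∈ 𝒜, IsClopen A ∧ ∀ x ∈ A, ∀ y ∈ A, |f x - f y| ≤ ε) ↔
    (∀ ε : ℝ, 0 < ε → ∃ g : X → ℝ, IsLocallyConstant g ∧
        (∃ M : ℝ, ∀ x : X, |g x| ≤ M) ∧ ∀ x : X, |f x - g x| ≤ ε) := by
  classical
  obtain ⟨M0, hM0⟩ := hb
  constructor
  · intro H ε hε
    rcases isEmpty_or_nonempty X with hX | hX
    · exact ⟨fun _ => 0, IsLocallyConstant.const 0, ⟨0, fun x => hX.elim x⟩,
        fun x => hX.elim x⟩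
    obtain ⟨𝒜, hc, hcov, hA⟩ := H ε hε
    obtain ⟨x0⟩ := hX
    have h𝒜ne : 𝒜.Nonempty := by
      have : x0 ∈ ⋃₀ 𝒜 := hcov ▸ mem_univ x0
      obtain ⟨A, hA', _⟩ := this
      exact ⟨A, hA'⟩
    obtain ⟨A, hAr⟩ := hc.exists_eq_range h𝒜ne
    have hmem : ∀ n, A n ∈ 𝒜 := fun n => hAr ▸ mem_range_self n
    have hclopen : ∀ n, IsClopen (A n) := fun n => (hA _ (hmem n)).1
    have hosc : ∀ n, ∀ x ∈ A n, ∀ y ∈ A n, |f x - f y| ≤ ε :=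
      fun n => (hA _ (hmem n)).2
    have hex : ∀ x : X, ∃ n, x ∈ A n := by
      intro x
      have : x ∈ ⋃₀ 𝒜 := hcov ▸ mem_univ x
      obtain ⟨S, hS, hxS⟩ := this
      rw [hAr] at hS
      obtain ⟨n, rfl⟩ := hS
      exact ⟨n, hxS⟩
    set c : ℕ → ℝ := fun n => if h : (A n).Nonempty then f h.choose else 0 with hc'
    set g : X → ℝ := fun x => c (Nat.find (hex x)) with hg'
    have hval : ∀ n, ∀ x ∈ A n, Nat.find (hex x) = n → |f x - g x| ≤ ε ∧ |g x| ≤ M0 := by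
      intro n x hx hfind
      have hne : (A n).Nonempty := ⟨x, hx⟩
      have : g x = f hne.choose := by simp [hg', hc', hfind, hne]
      rw [this]
      exact ⟨hosc n x hx _ hne.choose_spec, hM0 _⟩
    refine ⟨g, ?_, ⟨M0, fun x => (hval _ x (Nat.find_spec (hex x)) rfl).2⟩,
      fun x => (hval _ x (Nat.find_spec (hex x)) rfl).1⟩
    rw [IsLocallyConstant.iff_exists_open]
    intro x
    set n := Nat.find (hex x) with hn
    refine ⟨A n ∩ ⋂ m ∈ Finset.range n, (A m)ᶜ, ?_, ?_, ?_⟩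
    · exact ((hclopen n).2).inter
        (isOpen_biInter_finset fun m _ => (hclopen m).1.isOpen_compl)
    · refine ⟨Nat.find_spec (hex x), ?_⟩
      simp only [Set.mem_iInter, Set.mem_compl_iff]
      intro m hm
      exact Nat.find_min (hex x) (Finset.mem_range.mp hm)
    · intro y hy
      have h1 : y ∈ A n := hy.1
      have h2 : ∀ m < n, y ∉ A m := by
        intro m hm
        have := hy.2
        simp only [Set.mem_iInter, Set.mem_compl_iff] at this
        exact this m (Finset.mem_range.mpr hm)
      have hfy : Nat.find (hex y) = n := by
        refine le_antisymm (Nat.find_min' (hex y) h1) ?_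
        by_contra h
        push_neg at h
        exact h2 _ h (Nat.find_spec (hex y))
      simp [hg', hfy, ← hn]
  · intro H ε hε
    obtain ⟨g, hg, ⟨M, hM⟩, hfg⟩ := H (ε / 4) (by linarith)
    have hε2 : (0:ℝ) < ε / 2 := by linarith
    refine ⟨Set.range (fun n : ℤ => g ⁻¹' Set.Ico (n * (ε/2)) ((n+1) * (ε/2))),
      Set.countable_range _, ?_, ?_⟩
    · apply Set.eq_univ_of_forall
      intro x
      set n : ℤ := ⌊g x / (ε/2)⌋ with hn
      refine ⟨g ⁻¹' Set.Ico (n * (ε/2)) ((n+1) * (ε/2)), mem_range_self n, ?_, ?_⟩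
      · rw [← le_div_iff₀ hε2]
        exact Int.floor_le _
      · rw [← div_lt_iff₀ hε2]
        push_cast
        exact Int.lt_floor_add_one _
    · rintro A ⟨n, rfl⟩
      constructor
      · constructor
        · rw [← isOpen_compl_iff, ← Set.preimage_compl]
          exact hg _
        · exact hg _
      · intro x hx y hy
        simp only [Set.mem_preimage, Set.mem_Ico] at hx hy
        have h1 := hfg x
        have h2 := hfg y
        rw [abs_le] at h1 h2 ⊢
        constructor <;> nlinarith [hx.1, hx.2, hy.1, hy.2]
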